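/- Let d ≥ 1, let F ⊂ ℤ^d be a finite set with 0 ∈ F, and let A ⊂ ℤ^d satisfy F ⊕ A = ℤ^d. Let q be the product of all primes less than or equal to 2|F|. Then there is a decomposition 1_A = 1_{ℤ^d} − Σ_{f ∈ F \ {0}} φ_f, where for each f ∈ F \ {0}, φ_f : ℤ^d → [0,1] is a function which is qf-periodic, i.e. φ_f(qf + x) = φ_f(x) for every x ∈ ℤ^d. -/

import Mathlib

open Finset Filter

section Conv
variable {G : Type*} [AddCommGroup G] {k : Type*} [CommRing k]

noncomputable def conv (a : AddMonoidAlgebra k G) (v : G → k) (x : G) : k :=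
  a.coeff.sum fun g c => c * v (x - g)

lemma conv_zero (v : G → k) : conv (0 : AddMonoidAlgebra k G) v = 0 := by
  funext x; simp [conv]

lemma conv_single (g : G) (c : k) (v : G → k) (x : G) :
    conv (AddMonoidAlgebra.single g c : AddMonoidAlgebra k G) v x = c * v (x - g) := by
  simp [conv, Finsupp.sum_single_index]

lemma conv_add (a b : AddMonoidAlgebra k G) (v : G → k) :
    conv (a + b) v = conv a v + conv b v := by
  funext x
  simpa [conv] using Finsupp.sum_add_index' (f := a.coeff) (g := b.coeff) (h := fun g c => c * v (x - g)) (by simp) (fun g c1 c2 => add_mul c1 c2 (v (x - g)))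

lemma conv_addV (a : AddMonoidAlgebra k G) (v w : G → k) :
    conv a (v + w) = conv a v + conv a w := by
  funext x
  simp only [conv, Pi.add_apply, mul_add]
  exact Finsupp.sum_add

lemma conv_mul (a b : AddMonoidAlgebra k G) (v : G → k) :
    conv (a * b) v = conv a (conv b v) := by
  induction a using AddMonoidAlgebra.induction_linear with
  | zero => simp [conv_zero, zero_mul]
  | add a1 a2 h1 h2 => rw [add_mul, conv_add, conv_add, h1, h2]
  | single g c =>
    induction b using AddMonoidAlgebra.induction_linear with
    | zero => simp [conv_zero, mul_zero]; funext x; rw [conv_single]; simp [conv_zero]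
    | add b1 b2 h1 h2 =>
      rw [mul_add, conv_add, h1, h2, conv_add, conv_addV]
    | single h e =>
      funext x
      rw [AddMonoidAlgebra.single_mul_single, conv_single, conv_single, conv_single, sub_sub,
        mul_assoc]

lemma conv_finset_sum {ι : Type*} (s : Finset ι) (t : ι → AddMonoidAlgebra k G) (v : G → k)
    (x : G) : conv (∑ i ∈ s, t i) v x = ∑ i ∈ s, conv (t i) v x := by
  classical
  induction s using Finset.induction with
  | empty => simp [conv_zero]
  | insert i s hmem ih =>
    rw [Finset.sum_insert hmem, conv_add, Finset.sum_insert hmem, Pi.add_apply, ih]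

lemma conv_const (a : AddMonoidAlgebra k G) (c : k) (x : G) :
    conv a (fun _ => c) x = (a.coeff.sum fun _ e => e) * c := by
  simp [conv, Finsupp.sum, Finset.sum_mul]

lemma conv_pow_const (a : AddMonoidAlgebra k G) (n : ℕ) (c : k) (x : G) :
    conv (a ^ n) (fun _ => c) x = (a.coeff.sum fun _ e => e) ^ n * c := by
  induction n generalizing c x with
  | zero =>
    simp only [pow_zero]
    have h1 : (1 : AddMonoidAlgebra k G) = AddMonoidAlgebra.single 0 1 := rfl
    rw [h1, conv_single]
  | succ n ih =>
    rw [pow_succ', conv_mul]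
    have h1 : conv (a ^ n) (fun _ => c) = fun _ => (a.coeff.sum fun _ e => e) ^ n * c := by
      funext y; exact ih c y
    rw [h1, conv_const, pow_succ]
    ring

end Conv

open scoped Classical in
lemma dilation_step {G : Type*} [AddCommGroup G] (F : Finset G) (A : Set G)
    (hF : 0 < F.card) (p : ℕ) (hp : p.Prime) (hpF : F.card < p) (r : ℤ)
    (h : ∀ x : G, (∑ f ∈ F, if x - r • f ∈ A then 1 else 0 : ℕ) = 1) :
    ∀ x : G, (∑ f ∈ F, if x - ((p : ℤ) * r) • f ∈ A then 1 else 0 : ℕ) = 1 := by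
  intro x
  haveI : Fact p.Prime := ⟨hp⟩
  haveI : CharP (AddMonoidAlgebra (ZMod p) G) p :=
    charP_of_injective_ringHom (f := AddMonoidAlgebra.singleZeroRingHom)
      (fun a b hab => by simpa using AddMonoidAlgebra.single_right_injective hab) p
  set a : AddMonoidAlgebra (ZMod p) G := ∑ f ∈ F, AddMonoidAlgebra.single (r • f) 1 with ha
  set v : G → ZMod p := fun y => if y ∈ A then 1 else 0 with hv
  have hcast : ∀ (s : ℤ) (y : G),
      (∑ f ∈ F, if y - s • f ∈ A then (1 : ZMod p) else 0)
        = ((∑ f ∈ F, if y - s • f ∈ A then 1 else 0 : ℕ) : ZMod p) := by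
    intro s y
    rw [Nat.cast_sum]
    exact Finset.sum_congr rfl fun f _ => by split <;> simp
  have hav : conv a v = fun _ => (1 : ZMod p) := by
    funext y
    rw [ha, conv_finset_sum]
    simp only [conv_single, one_mul, hv]
    rw [hcast r y, h y, Nat.cast_one]
  have hmass : (a.coeff.sum fun _ e => e) = (F.card : ZMod p) := by
    have h1 := conv_pow_const a 1 (1 : ZMod p) 0
    rw [pow_one, mul_one, pow_one] at h1
    rw [← h1, ha, conv_finset_sum]
    simp [conv_single]
  have hfrob : a ^ p = ∑ f ∈ F, AddMonoidAlgebra.single (((p : ℤ) * r) • f) (1 : ZMod p) := by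
    rw [ha, sum_pow_char]
    refine Finset.sum_congr rfl fun f _ => ?_
    rw [AddMonoidAlgebra.single_pow, one_pow, mul_smul, natCast_zsmul]
  have h1 : conv (a ^ p) v x
      = ((∑ f ∈ F, if x - ((p : ℤ) * r) • f ∈ A then 1 else 0 : ℕ) : ZMod p) := by
    rw [hfrob, conv_finset_sum]
    simp only [conv_single, one_mul, hv]
    exact hcast _ x
  have h2 : conv (a ^ p) v x = 1 := by
    have hps : a ^ p = a ^ (p - 1) * a := by
      rw [← pow_succ]; congr 1; omega
    rw [hps, conv_mul, hav, conv_pow_const, hmass, mul_one]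
    refine ZMod.pow_card_sub_one_eq_one ?_
    rw [Ne, ZMod.natCast_eq_zero_iff]
    exact fun hd => absurd (Nat.le_of_dvd hF hd) (not_le.mpr hpF)
  have hle : (∑ f ∈ F, if x - ((p : ℤ) * r) • f ∈ A then 1 else 0 : ℕ) ≤ F.card := by
    rw [Finset.card_eq_sum_ones]
    exact Finset.sum_le_sum fun f _ => by split <;> omega
  have hmod : ((∑ f ∈ F, if x - ((p : ℤ) * r) • f ∈ A then 1 else 0 : ℕ) : ZMod p)
      = ((1 : ℕ) : ZMod p) := by
    rw [← h1, h2, Nat.cast_one]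
  have hme := (ZMod.natCast_eq_natCast_iff _ _ _).mp hmod
  have hlt : (∑ f ∈ F, if x - ((p : ℤ) * r) • f ∈ A then 1 else 0 : ℕ) < p :=
    lt_of_le_of_lt hle hpF
  have h1p : 1 < p := hp.one_lt
  rwa [Nat.ModEq, Nat.mod_eq_of_lt hlt, Nat.mod_eq_of_lt h1p] at hme

open scoped Classical in
lemma dilation {G : Type*} [AddCommGroup G] (F : Finset G) (A : Set G) (hF : 0 < F.card)
    (h1 : ∀ x : G, (∑ f ∈ F, if x - (1 : ℤ) • f ∈ A then 1 else 0 : ℕ) = 1) :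
    ∀ r : ℕ, 0 < r → (∀ p : ℕ, p.Prime → p ∣ r → F.card < p) →
      ∀ x : G, (∑ f ∈ F, if x - (r : ℤ) • f ∈ A then 1 else 0 : ℕ) = 1 := by
  intro r
  induction r using Nat.strong_induction_on with
  | _ r ih =>
    intro hr hpr x
    rcases eq_or_lt_of_le (show 1 ≤ r from hr) with h1r | h1r
    · have : ((1 : ℕ) : ℤ) = (1 : ℤ) := by norm_num
      rw [← h1r, this]
      exact h1 x
    · set p := r.minFac with hpdef
      have hrne : r ≠ 1 := by omega
      have hp : p.Prime := Nat.minFac_prime hrne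
      have hdvd : p ∣ r := Nat.minFac_dvd r
      set m := r / p with hmdef
      have hm : p * m = r := Nat.mul_div_cancel' hdvd
      have hmlt : m < r := Nat.div_lt_self hr hp.one_lt
      have hm0 : 0 < m := Nat.div_pos (Nat.minFac_le hr) hp.pos
      have hIH := ih m hmlt hm0
        (fun s hs hsd => hpr s hs (hsd.trans (Nat.div_dvd_of_dvd hdvd)))
      have := dilation_step F A hF p hp (hpr p hp hdvd) ((m : ℕ) : ℤ) hIH x
      have hcast : ((r : ℕ) : ℤ) = (p : ℤ) * ((m : ℕ) : ℤ) := by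
        rw [← hm]; push_cast; ring
      rw [hcast]
      exact this

/-- **Structure theorem for tilings of ℤ^d.**  Suppose `F ⊕ A = ℤ^d` with `0 ∈ F`, and let
`q` be the product of all primes `p ≤ 2|F|`.  Then `1_A = 1 - ∑_{f ∈ F \ {0}} φ_f` where each
`φ_f : ℤ^d → [0,1]` is `q•f`-periodic. -/
theorem structure_theorem_Zd {d : ℕ} (hd : 1 ≤ d)
    (F : Finset (Fin d → ℤ)) (A : Set (Fin d → ℤ))
    (h0 : (0 : Fin d → ℤ) ∈ F)
    (htile : ∀ x : Fin d → ℤ, ∃! f, f ∈ F ∧ x - f ∈ A)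
    (q : ℕ) (hq : q = ∏ p ∈ Finset.filter Nat.Prime (Finset.range (2 * F.card + 1)), p) :
    ∃ φ : (Fin d → ℤ) → (Fin d → ℤ) → ℝ,
      (∀ f ∈ F.erase 0, ∀ x, φ f x ∈ Set.Icc (0 : ℝ) 1) ∧
      (∀ f ∈ F.erase 0, ∀ x, φ f ((q : ℤ) • f + x) = φ f x) ∧
      (∀ x, Set.indicator A (fun _ => (1 : ℝ)) x = 1 - ∑ f ∈ F.erase 0, φ f x) := by
  classical
  have hFpos : 0 < F.card := Finset.card_pos.mpr ⟨0, h0⟩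
  -- the tiling condition in counting form
  have h1 : ∀ x : Fin d → ℤ, (∑ f ∈ F, if x - (1 : ℤ) • f ∈ A then 1 else 0 : ℕ) = 1 := by
    intro x
    obtain ⟨f0, ⟨hf0F, hf0A⟩, huniq⟩ := htile x
    have hfilter : F.filter (fun f => x - (1 : ℤ) • f ∈ A) = {f0} := by
      ext g
      simp only [Finset.mem_filter, Finset.mem_singleton, one_smul]
      constructor
      · rintro ⟨hg, hgA⟩; exact huniq g ⟨hg, hgA⟩
      · rintro rfl; exact ⟨hf0F, hf0A⟩
    rw [← Finset.card_filter, hfilter, Finset.card_singleton]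
  -- dilated tilings
  have hq2 : ∀ p : ℕ, p.Prime → p ≤ 2 * F.card → p ∣ q := by
    intro p hp hple
    rw [hq]
    exact Finset.dvd_prod_of_mem _ (by simp [Finset.mem_filter, Finset.mem_range, hp]; omega)
  have hSr : ∀ j : ℕ, ∀ x : Fin d → ℤ,
      (∑ f ∈ F, if x - ((1 + j * q : ℕ) : ℤ) • f ∈ A then 1 else 0 : ℕ) = 1 := by
    intro j
    refine dilation F A hFpos h1 (1 + j * q) (by omega) ?_
    intro p hp hdvd
    by_contra hle
    push_neg at hle
    have hple : p ≤ 2 * F.card := by omega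
    have hpq : p ∣ q := hq2 p hp hple
    have : p ∣ 1 := by
      have h2 : p ∣ j * q := Dvd.dvd.mul_left hpq j
      simpa using (Nat.dvd_sub hdvd h2)
    exact absurd (Nat.le_of_dvd one_pos this) (by have := hp.one_lt; omega)
  -- real indicator
  set Ind : (Fin d → ℤ) → ℝ := fun y => if y ∈ A then 1 else 0 with hInd
  have hInd01 : ∀ y, Ind y ∈ Set.Icc (0 : ℝ) 1 := by
    intro y; rw [hInd]; dsimp only; split <;> norm_num
  have hreal : ∀ (j : ℕ) (x : Fin d → ℤ),
      ∑ f ∈ F.erase 0, Ind (x - ((1 + j * q : ℕ) : ℤ) • f) = 1 - Ind x := by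
    intro j x
    have h := hSr j x
    have hcast : ∑ f ∈ F, Ind (x - ((1 + j * q : ℕ) : ℤ) • f) = 1 := by
      have : ∑ f ∈ F, Ind (x - ((1 + j * q : ℕ) : ℤ) • f)
          = ((∑ f ∈ F, if x - ((1 + j * q : ℕ) : ℤ) • f ∈ A then 1 else 0 : ℕ) : ℝ) := by
        rw [Nat.cast_sum]
        exact Finset.sum_congr rfl fun f _ => by rw [hInd]; dsimp only; split <;> simp
      rw [this, h, Nat.cast_one]
    have herase := Finset.sum_erase_add F (fun f => Ind (x - ((1 + j * q : ℕ) : ℤ) • f)) h0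
    simp only [smul_zero, sub_zero] at herase
    rw [hcast] at herase
    linarith
  -- Cesàro averages
  set t : (Fin d → ℤ) → (Fin d → ℤ) → ℕ → ℝ :=
    fun f x j => Ind (x - ((1 + j * q : ℕ) : ℤ) • f) with ht
  set c : (Fin d → ℤ) → (Fin d → ℤ) → ℕ → ℝ :=
    fun f x N => (N : ℝ)⁻¹ * ∑ j ∈ Finset.range N, t f x j with hc
  have hc01 : ∀ f x N, c f x N ∈ Set.Icc (0 : ℝ) 1 := by
    intro f x N
    rw [hc]; dsimp only
    rcases Nat.eq_zero_or_pos N with hN | hN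
    · subst hN; simp
    constructor
    · apply mul_nonneg (by positivity)
      exact Finset.sum_nonneg fun j _ => (hInd01 _).1
    · have hsle : ∑ j ∈ Finset.range N, t f x j ≤ (N : ℝ) := by
        calc ∑ j ∈ Finset.range N, t f x j ≤ ∑ j ∈ Finset.range N, 1 :=
              Finset.sum_le_sum fun j _ => (hInd01 _).2
          _ = (N : ℝ) := by simp
      have hNpos : (0 : ℝ) < N := by exact_mod_cast hN
      calc (N : ℝ)⁻¹ * ∑ j ∈ Finset.range N, t f x j ≤ (N : ℝ)⁻¹ * N :=
            mul_le_mul_of_nonneg_left hsle (by positivity)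
        _ = 1 := inv_mul_cancel₀ (ne_of_gt hNpos)
  -- ultrafilter limit
  set U : Ultrafilter ℕ := Ultrafilter.of Filter.atTop with hUdef
  have hU : (U : Filter ℕ) ≤ Filter.atTop := Ultrafilter.of_le _
  have hlim : ∀ f x, ∃ L ∈ Set.Icc (0 : ℝ) 1, Filter.Tendsto (c f x) U (nhds L) := by
    intro f x
    have hle : (Ultrafilter.map (c f x) U : Filter ℝ) ≤ Filter.principal (Set.Icc 0 1) := by
      rw [Filter.le_principal_iff]
      exact Filter.mem_map.mpr (Filter.univ_mem' fun N => hc01 f x N)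
    obtain ⟨L, hL, hle'⟩ := (isCompact_Icc).ultrafilter_le_nhds (Ultrafilter.map (c f x) U) hle
    exact ⟨L, hL, hle'⟩
  choose φ hφmem hφtend using hlim
  refine ⟨φ, fun f _ x => hφmem f x, ?_, ?_⟩
  · -- periodicity
    intro f hf x
    set y : Fin d → ℤ := (q : ℤ) • f + x with hy
    -- index shift identity
    have hshift : ∀ j : ℕ, t f y (j + 1) = t f x j := by
      intro j
      rw [ht]; dsimp only
      congr 1
      have hsmul : ((1 + (j + 1) * q : ℕ) : ℤ) • f
          = ((1 + j * q : ℕ) : ℤ) • f + (q : ℤ) • f := by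
        rw [← add_smul]; congr 1; push_cast; ring
      rw [hy, hsmul]; abel
    have hdiffeq : ∀ m : ℕ,
        c f y (m + 1) - c f x (m + 1) = ((m + 1 : ℕ) : ℝ)⁻¹ * (t f y 0 - t f x m) := by
      intro m
      have hy' : ∑ j ∈ Finset.range (m + 1), t f y j
          = (∑ j ∈ Finset.range m, t f x j) + t f y 0 := by
        rw [Finset.sum_range_succ']
        congr 1
        exact Finset.sum_congr rfl fun j _ => hshift j
      have hx' : ∑ j ∈ Finset.range (m + 1), t f x j
          = (∑ j ∈ Finset.range m, t f x j) + t f x m := Finset.sum_range_succ _ _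
      rw [hc]; dsimp only
      rw [hy', hx']
      ring
    have hdiff0 : Filter.Tendsto (fun N => c f y N - c f x N) Filter.atTop (nhds 0) := by
      apply squeeze_zero_norm' (a := fun N : ℕ => 2 / (N : ℝ))
      · refine Filter.eventually_atTop.mpr ⟨1, fun N hN => ?_⟩
        obtain ⟨m, rfl⟩ : ∃ m, N = m + 1 := ⟨N - 1, by omega⟩
        rw [hdiffeq m]
        rw [norm_mul, norm_inv]
        have h1 : ‖((m + 1 : ℕ) : ℝ)‖ = ((m + 1 : ℕ) : ℝ) := by
          rw [Real.norm_eq_abs, abs_of_nonneg (by positivity)]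
        have h2 : ‖t f y 0 - t f x m‖ ≤ 2 := by
          rw [Real.norm_eq_abs]
          have := hInd01 (y - ((1 + 0 * q : ℕ) : ℤ) • y)
          have ha := hInd01 (y - ((1 + 0 * q : ℕ) : ℤ) • f)
          have hb := hInd01 (x - ((1 + m * q : ℕ) : ℤ) • f)
          rw [ht]; dsimp only
          rw [abs_le]
          constructor <;> [linarith [ha.1, ha.2, hb.1, hb.2]; linarith [ha.1, ha.2, hb.1, hb.2]]
        rw [h1, div_eq_mul_inv, mul_comm]
        apply mul_le_mul_of_nonneg_right h2 (by positivity)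
      · exact tendsto_const_div_atTop_nhds_zero_nat 2
    have htendy : Filter.Tendsto (c f y) (U : Filter ℕ) (nhds (φ f x)) := by
      have hadd := (hφtend f x).add (hdiff0.mono_left hU)
      rw [add_zero] at hadd
      refine hadd.congr fun N => by ring
    exact tendsto_nhds_unique (hφtend f y) htendy
  · -- the sum identity
    intro x
    have hsum : Filter.Tendsto (fun N => ∑ f ∈ F.erase 0, c f x N) (U : Filter ℕ)
        (nhds (∑ f ∈ F.erase 0, φ f x)) :=
      tendsto_finset_sum _ fun f _ => hφtend f x
    have hconst : ∀ N : ℕ, 1 ≤ N → ∑ f ∈ F.erase 0, c f x N = 1 - Ind x := by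
      intro N hN
      have hNne : ((N : ℝ)) ≠ 0 := by
        have : (0 : ℝ) < N := by exact_mod_cast hN
        exact ne_of_gt this
      rw [hc]; dsimp only
      rw [← Finset.mul_sum, Finset.sum_comm]
      have : ∑ j ∈ Finset.range N, ∑ f ∈ F.erase 0, t f x j
          = ∑ j ∈ Finset.range N, (1 - Ind x) := by
        refine Finset.sum_congr rfl fun j _ => ?_
        rw [ht]; dsimp only
        exact hreal j x
      rw [this, Finset.sum_const, Finset.card_range, nsmul_eq_mul]
      field_simp
    have hev : ∀ᶠ N in (U : Filter ℕ), (fun N => ∑ f ∈ F.erase 0, c f x N) N = 1 - Ind x := by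
      have : ∀ᶠ N in Filter.atTop, (fun N => ∑ f ∈ F.erase 0, c f x N) N = 1 - Ind x :=
        Filter.eventually_atTop.mpr ⟨1, fun N hN => hconst N hN⟩
      exact this.filter_mono hU
    have htend2 : Filter.Tendsto (fun N => ∑ f ∈ F.erase 0, c f x N) (U : Filter ℕ)
        (nhds (1 - Ind x)) :=
      Filter.Tendsto.congr' (Filter.EventuallyEq.symm hev) tendsto_const_nhds
    have heq : ∑ f ∈ F.erase 0, φ f x = 1 - Ind x := tendsto_nhds_unique hsum htend2
    have hindic : Set.indicator A (fun _ => (1 : ℝ)) x = Ind x := by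
      rw [hInd, Set.indicator_apply]
    rw [hindic, heq]
    ring
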